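/- For every set X, sup{ℵ(X^α) : α < ℵ(X)} = sup{ℵ(α^α) : α < ℵ(X)}, where X^α denotes the set of all functions from the ordinal α to X and α^α the set of all functions from α to α. -/

import Mathlib

universe u

/-- The Hartogs number `ℵ(X)`: the least ordinal `α` such that there is no injection
from `α` into `X`. -/
noncomputable def hartogsOrd (X : Type u) : Ordinal.{u} :=
  sInf {α : Ordinal.{u} | ¬ ∃ f : α.ToType → X, Function.Injective f}

open Cardinal

lemma hartogsOrd_eq (Y : Type u) : hartogsOrd Y = (Order.succ (#Y)).ord := by
  have hset : {α : Ordinal.{u} | ¬ ∃ f : α.ToType → Y, Function.Injective f}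
      = {α : Ordinal.{u} | #Y < α.card} := by
    ext α
    simp only [Set.mem_setOf_eq, ← not_le]
    constructor
    · intro h hle
      rw [← Cardinal.mk_toType] at hle
      obtain ⟨f⟩ := Cardinal.le_def _ _ |>.1 hle
      exact h ⟨f, f.injective⟩
    · rintro h ⟨f, hf⟩
      exact h (by rw [← Cardinal.mk_toType]; exact ⟨⟨f, hf⟩⟩)
  unfold hartogsOrd
  rw [hset]
  apply le_antisymm
  · apply csInf_le (OrderBot.bddBelow _)
    simp [Cardinal.card_ord, Order.lt_succ_iff]
  · apply le_csInf ⟨(Order.succ (#Y)).ord, by simp [Cardinal.card_ord, Order.lt_succ_iff]⟩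
    intro α hα
    exact Cardinal.ord_le.2 (Order.succ_le_of_lt hα)

lemma lt_hartogsOrd_iff {X : Type u} {α : Ordinal.{u}} :
    α < hartogsOrd X ↔ α.card ≤ #X := by
  rw [hartogsOrd_eq, Cardinal.lt_ord, Order.lt_succ_iff]

lemma hartogsOrd_le_hartogsOrd {Y Z : Type u} (h : #Y ≤ #Z) :
    hartogsOrd Y ≤ hartogsOrd Z := by
  rw [hartogsOrd_eq, hartogsOrd_eq]
  exact Cardinal.ord_le_ord.2 (Order.succ_le_succ h)

/-- For every set `X`, `sup{ℵ(X^α) : α < ℵ(X)} = sup{ℵ(α^α) : α < ℵ(X)}`. -/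
theorem statement16 (X : Type u) :
    (⨆ α : Set.Iio (hartogsOrd X), hartogsOrd ((α.1).ToType → X)) =
      ⨆ α : Set.Iio (hartogsOrd X), hartogsOrd ((α.1).ToType → (α.1).ToType) := by
  have : Nonempty (Set.Iio (hartogsOrd X)) := ⟨⟨0, lt_hartogsOrd_iff.2 (by rw [Ordinal.card_zero]; exact zero_le)⟩⟩
  apply le_antisymm
  · -- LHS ≤ RHS: use β = (#X).ord
    have hβ : (#X).ord < hartogsOrd X := by
      rw [lt_hartogsOrd_iff, Cardinal.card_ord]
    apply ciSup_le
    rintro ⟨α, hα⟩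
    have hαc : α.card ≤ #X := lt_hartogsOrd_iff.1 hα
    have key : #(α.ToType → X) ≤ #((#X).ord.ToType → (#X).ord.ToType) := by
      simp only [← Cardinal.power_def, Cardinal.mk_toType, Cardinal.mk_ord_toType, Cardinal.card_ord]
      rcases eq_or_ne (#X) 0 with h0 | h0
      · have : α.card = 0 := le_antisymm (h0 ▸ hαc) (zero_le)
        rw [h0, this]
      · exact Cardinal.power_le_power_left h0 hαc
    calc hartogsOrd (α.ToType → X) ≤ hartogsOrd ((#X).ord.ToType → (#X).ord.ToType) :=
            hartogsOrd_le_hartogsOrd key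
      _ ≤ _ := le_ciSup Ordinal.bddAbove_of_small (⟨(#X).ord, hβ⟩ : Set.Iio (hartogsOrd X))
  · apply ciSup_le
    rintro ⟨α, hα⟩
    have hαc : α.card ≤ #X := lt_hartogsOrd_iff.1 hα
    have key : #(α.ToType → α.ToType) ≤ #(α.ToType → X) := by
      rw [← Cardinal.power_def, ← Cardinal.power_def, Cardinal.mk_toType]
      exact Cardinal.power_le_power_right hαc
    calc hartogsOrd (α.ToType → α.ToType) ≤ hartogsOrd (α.ToType → X) :=
            hartogsOrd_le_hartogsOrd key
      _ ≤ _ := le_ciSup Ordinal.bddAbove_of_small (⟨α, hα⟩ : Set.Iio (hartogsOrd X))
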